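/- Fix an integer N ≥ 2, Λ < 0, and set λ_N = √(N(N−1)(N+1)/6). Suppose real functions m̃(R), S̃(R), ω̃(R) satisfy, on an interval I ⊆ (0, ∞), the su(2) EYM field equations with cosmological constant Λ̃ = λ_N²Λ (i.e. the su(N) EYM field equations specialized to N = 2, with single gauge field function ω̃). Define m(r) = λ_N · m̃(r/λ_N), S(r) = S̃(r/λ_N), and ω_j(r) = √(j(N−j)) · ω̃(r/λ_N) for j = 1, …, N−1. Then (m, S, ω_1, …, ω_{N−1}) satisfies the su(N) EYM field equations with cosmological constant Λ at every r ∈ λ_N · I. -/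

import Mathlib

open Filter Asymptotics Topology

noncomputable section

/-- μ(r) = 1 − 2m(r)/r − Λr²/3. -/
def muF (Λ : ℝ) (m : ℝ → ℝ) (r : ℝ) : ℝ := 1 - 2 * m r / r - Λ * r ^ 2 / 3

/-- G = Σ_{j=1}^{N−1} (ω_j′)². -/
def GF (N : ℕ) (ω : ℕ → ℝ → ℝ) (r : ℝ) : ℝ :=
  ∑ j ∈ Finset.Icc 1 (N - 1), deriv (ω j) r ^ 2

/-- p_θ evaluated on a set of gauge-field values `w`. -/
def pThetaVal (N : ℕ) (w : ℕ → ℝ) (r : ℝ) : ℝ :=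
  1 / (4 * r ^ 4) *
    ∑ j ∈ Finset.Icc 1 N, (w j ^ 2 - w (j - 1) ^ 2 - (N : ℝ) - 1 + 2 * (j : ℝ)) ^ 2

/-- p_θ = (1/4r⁴) Σ_{j=1}^{N} (ω_j² − ω_{j−1}² − N − 1 + 2j)². -/
def pTheta (N : ℕ) (ω : ℕ → ℝ → ℝ) (r : ℝ) : ℝ := pThetaVal N (fun j => ω j r) r

/-- W_j evaluated on gauge-field values `w`. -/
def WVal (w : ℕ → ℝ) (j : ℕ) : ℝ :=
  1 - w j ^ 2 + 1 / 2 * (w (j - 1) ^ 2 + w (j + 1) ^ 2)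

/-- W_j = 1 − ω_j² + (1/2)(ω_{j−1}² + ω_{j+1}²). -/
def WF (ω : ℕ → ℝ → ℝ) (j : ℕ) (r : ℝ) : ℝ := WVal (fun i => ω i r) j

/-- The static spherically symmetric su(N) EYM field equations at radius `r`:
m′ = μG + r²p_θ, S′ = S·(2G/r), and the N−1 Yang–Mills equations
r²μω_j″ + (2m − 2r³p_θ − (2Λ/3)r³)ω_j′ + W_jω_j = 0, with ω₀ ≡ 0, ω_N ≡ 0. -/
def EYM (N : ℕ) (Λ : ℝ) (m S : ℝ → ℝ) (ω : ℕ → ℝ → ℝ) (r : ℝ) : Prop :=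
  ω 0 r = 0 ∧ ω N r = 0 ∧
  HasDerivAt m (muF Λ m r * GF N ω r + r ^ 2 * pTheta N ω r) r ∧
  HasDerivAt S (S r * (2 * GF N ω r / r)) r ∧
  ∀ j ∈ Finset.Icc 1 (N - 1),
    DifferentiableAt ℝ (ω j) r ∧ DifferentiableAt ℝ (deriv (ω j)) r ∧
    r ^ 2 * muF Λ m r * deriv (deriv (ω j)) r
      + (2 * m r - 2 * r ^ 3 * pTheta N ω r - 2 * Λ * r ^ 3 / 3) * deriv (ω j) r
      + WF ω j r * ω j r = 0

/-- Boundary conditions at infinity: m → M, S → 1, ω_j → ω_{j,∞} as r → ∞. -/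
def BCInfinity (N : ℕ) (m S : ℝ → ℝ) (ω : ℕ → ℝ → ℝ) : Prop :=
  (∃ M : ℝ, Tendsto m atTop (𝓝 M)) ∧ Tendsto S atTop (𝓝 1) ∧
  ∀ j ∈ Finset.Icc 1 (N - 1), ∃ w : ℝ, Tendsto (ω j) atTop (𝓝 w)

/-- `f` has exactly `k` zeros in the set `s`. -/
def HasExactlyZeros (f : ℝ → ℝ) (s : Set ℝ) (k : ℕ) : Prop :=
  {r ∈ s | f r = 0}.Finite ∧ {r ∈ s | f r = 0}.ncard = k

/-- λ_N = √(N(N−1)(N+1)/6). -/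
def lamN (N : ℕ) : ℝ := Real.sqrt ((N : ℝ) * ((N : ℝ) - 1) * ((N : ℝ) + 1) / 6)


lemma sum_Icc_id_real (n : ℕ) : ∑ j ∈ Finset.Icc 1 n, (j : ℝ) = n * (n + 1) / 2 := by
  induction n with
  | zero => simp
  | succ n ih =>
    rw [Finset.sum_Icc_succ_top (by omega), ih]
    push_cast; ring

lemma sum_Icc_sq_real (n : ℕ) :
    ∑ j ∈ Finset.Icc 1 n, (j : ℝ) ^ 2 = n * (n + 1) * (2 * n + 1) / 6 := by
  induction n with
  | zero => simp
  | succ n ih =>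
    rw [Finset.sum_Icc_succ_top (by omega), ih]
    push_cast; ring

lemma deriv_comp_div (f : ℝ → ℝ) (c : ℝ) (hc : c ≠ 0) (x : ℝ) :
    deriv (fun y => f (y / c)) x = deriv f (x / c) / c := by
  by_cases h : DifferentiableAt ℝ f (x / c)
  · have hinner : HasDerivAt (fun y : ℝ => y / c) (1 / c) x := by
      simpa using (hasDerivAt_id x).div_const c
    have := (h.hasDerivAt.comp x hinner).deriv
    rw [show (f ∘ fun y : ℝ => y / c) = fun y => f (y / c) from rfl] at this
    rw [this]; ring
  · have h2 : ¬ DifferentiableAt ℝ (fun y => f (y / c)) x := by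
      intro hd
      apply h
      have hd' : DifferentiableAt ℝ (fun y => f (y / c)) ((fun z : ℝ => c * z) (x / c)) := by
        simpa [mul_div_cancel₀ _ hc] using hd
      have h3 := hd'.comp (x / c) ((differentiableAt_id.const_mul c :
        DifferentiableAt ℝ (fun z : ℝ => c * z) (x / c)))
      have : ((fun y => f (y / c)) ∘ fun z : ℝ => c * z) = f := by
        funext z; simp [mul_div_cancel_left₀ _ hc]
      rwa [this] at h3
    rw [deriv_zero_of_not_differentiableAt h, deriv_zero_of_not_differentiableAt h2, zero_div]

/-- **Embedded su(2) solutions.** If (m̃, S̃, ω̃) solves the su(2) EYM equations with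
cosmological constant Λ̃ = λ_N²Λ on an interval I ⊆ (0,∞), then the rescaled configuration
m(r) = λ_N m̃(r/λ_N), S(r) = S̃(r/λ_N), ω_j(r) = √(j(N−j)) ω̃(r/λ_N) solves the su(N) EYM
equations with cosmological constant Λ at every point of λ_N · I. -/
theorem embedded_su2_solution (N : ℕ) (hN : 2 ≤ N) (Λ : ℝ) (hΛ : Λ < 0)
    (I : Set ℝ) (hI : I ⊆ Set.Ioi (0 : ℝ))
    (mt St ωt : ℝ → ℝ)
    (hsol : ∀ R ∈ I,
      EYM 2 ((lamN N) ^ 2 * Λ) mt St (fun j => if j = 1 then ωt else fun _ => 0) R) :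
    ∀ R ∈ I,
      EYM N Λ (fun r => lamN N * mt (r / lamN N)) (fun r => St (r / lamN N))
        (fun j r => Real.sqrt ((j : ℝ) * ((N : ℝ) - (j : ℝ))) * ωt (r / lamN N))
        (lamN N * R) := by
  intro R hR
  have hRpos : 0 < R := hI hR
  have hRne : R ≠ 0 := ne_of_gt hRpos
  set l := lamN N with hldef
  have hN1 : (1:ℝ) ≤ (N:ℝ) := by exact_mod_cast Nat.one_le_of_lt hN
  have hN2 : (2:ℝ) ≤ (N:ℝ) := by exact_mod_cast hN
  have hprod : (0:ℝ) < (N:ℝ) * ((N:ℝ) - 1) * ((N:ℝ) + 1) / 6 := by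
    have h1 : (0:ℝ) < (N:ℝ) := by linarith
    have h2 : (0:ℝ) < (N:ℝ) - 1 := by linarith
    have h3 : (0:ℝ) < (N:ℝ) + 1 := by linarith
    positivity
  have hlsq : l ^ 2 = (N:ℝ) * ((N:ℝ) - 1) * ((N:ℝ) + 1) / 6 :=
    Real.sq_sqrt (le_of_lt hprod)
  have hlpos : 0 < l := Real.sqrt_pos.mpr hprod
  have hlne : l ≠ 0 := ne_of_gt hlpos
  have hrR : l * R / l = R := by field_simp
  have hr0ne : l * R ≠ 0 := mul_ne_zero hlne hRne
  obtain ⟨h0, h2, hm, hS, hYM⟩ := hsol R hR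
  obtain ⟨hω1d, hω1d2, hYMeq⟩ := hYM 1 (by norm_num)
  have hωd : DifferentiableAt ℝ ωt R := hω1d
  have hωd2 : DifferentiableAt ℝ (deriv ωt) R := hω1d2
  set vec := (fun j => if j = 1 then ωt else fun _ => (0:ℝ)) with hvec
  set a := ωt R with ha
  set a' := deriv ωt R with ha'
  set a'' := deriv (deriv ωt) R with ha''
  -- su(2) quantities
  have hG2 : GF 2 vec R = a' ^ 2 := by
    simp [GF, hvec, Finset.Icc_self, ha']
  have hP2 : pTheta 2 vec R = (a ^ 2 - 1) ^ 2 / (2 * R ^ 4) := by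
    rw [pTheta, pThetaVal, show Finset.Icc 1 2 = ({1, 2} : Finset ℕ) by decide,
      Finset.sum_pair (by norm_num)]
    simp only [hvec]
    norm_num
    field_simp
    ring
  have hW2 : WF vec 1 R = 1 - a ^ 2 := by
    simp [WF, WVal, hvec, ha]
  -- square roots
  have hc2 : ∀ j : ℕ, j ≤ N →
      Real.sqrt ((j:ℝ) * ((N:ℝ) - (j:ℝ))) ^ 2 = (j:ℝ) * ((N:ℝ) - (j:ℝ)) := by
    intro j hj
    refine Real.sq_sqrt (mul_nonneg (by positivity) (by
      have : (j:ℝ) ≤ (N:ℝ) := by exact_mod_cast hj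
      linarith))
  -- derivatives of the scaled gauge functions
  have hderivfun : ∀ j : ℕ,
      deriv (fun r => Real.sqrt ((j:ℝ) * ((N:ℝ) - (j:ℝ))) * ωt (r / l)) =
        fun r => Real.sqrt ((j:ℝ) * ((N:ℝ) - (j:ℝ))) * (deriv ωt (r / l) / l) := by
    intro j
    funext r
    rw [deriv_const_mul_field, deriv_comp_div ωt l hlne]
  have hderiv_at : ∀ j : ℕ,
      deriv (fun r => Real.sqrt ((j:ℝ) * ((N:ℝ) - (j:ℝ))) * ωt (r / l)) (l * R) =
        Real.sqrt ((j:ℝ) * ((N:ℝ) - (j:ℝ))) * (a' / l) := by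
    intro j
    rw [hderivfun j]
    simp only [hrR]
    rfl
  have hderiv2_at : ∀ j : ℕ,
      deriv (deriv (fun r => Real.sqrt ((j:ℝ) * ((N:ℝ) - (j:ℝ))) * ωt (r / l))) (l * R) =
        Real.sqrt ((j:ℝ) * ((N:ℝ) - (j:ℝ))) * (a'' / l / l) := by
    intro j
    rw [hderivfun j]
    have : (fun r => Real.sqrt ((j:ℝ) * ((N:ℝ) - (j:ℝ))) * (deriv ωt (r / l) / l)) =
        fun r => (Real.sqrt ((j:ℝ) * ((N:ℝ) - (j:ℝ))) / l) * deriv ωt (r / l) := by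
      funext r; ring
    rw [this, deriv_const_mul_field, deriv_comp_div (deriv ωt) l hlne, hrR]
    ring
  -- GF for su(N)
  have hA : ∑ j ∈ Finset.Icc 1 (N-1), (j:ℝ) * ((N:ℝ) - (j:ℝ)) =
      (N:ℝ) * ((N:ℝ) - 1) * ((N:ℝ) + 1) / 6 := by
    have h1 := sum_Icc_id_real (N-1)
    have h2 := sum_Icc_sq_real (N-1)
    have hcast : ((N-1 : ℕ) : ℝ) = (N:ℝ) - 1 := by
      rw [Nat.cast_sub (by omega)]; norm_num
    calc ∑ j ∈ Finset.Icc 1 (N-1), (j:ℝ) * ((N:ℝ) - (j:ℝ))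
        = (N:ℝ) * ∑ j ∈ Finset.Icc 1 (N-1), (j:ℝ)
            - ∑ j ∈ Finset.Icc 1 (N-1), (j:ℝ) ^ 2 := by
          rw [Finset.mul_sum, ← Finset.sum_sub_distrib]
          exact Finset.sum_congr rfl (fun j _ => by ring)
      _ = _ := by rw [h1, h2, hcast]; ring
  have hGN : GF N (fun j r => Real.sqrt ((j:ℝ) * ((N:ℝ) - (j:ℝ))) * ωt (r / l)) (l * R)
      = a' ^ 2 := by
    rw [GF]
    have : ∀ j ∈ Finset.Icc 1 (N-1),
        deriv (fun r => Real.sqrt ((j:ℝ) * ((N:ℝ) - (j:ℝ))) * ωt (r / l)) (l * R) ^ 2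
          = (j:ℝ) * ((N:ℝ) - (j:ℝ)) * (a' / l) ^ 2 := by
      intro j hj
      rw [hderiv_at j, mul_pow, hc2 j (by simp at hj; omega)]
    rw [Finset.sum_congr rfl this, ← Finset.sum_mul, hA, ← hlsq]
    field_simp
  -- pTheta for su(N)
  have hB : ∑ j ∈ Finset.Icc 1 N, ((N:ℝ) + 1 - 2 * (j:ℝ)) ^ 2 =
      (N:ℝ) * ((N:ℝ) - 1) * ((N:ℝ) + 1) / 3 := by
    have hexp : ∀ j ∈ Finset.Icc 1 N, ((N:ℝ) + 1 - 2 * (j:ℝ)) ^ 2 =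
        (((N:ℝ) + 1) ^ 2 - (4 * ((N:ℝ) + 1)) * (j:ℝ)) + 4 * (j:ℝ) ^ 2 := by
      intro j _; ring
    rw [Finset.sum_congr rfl hexp, Finset.sum_add_distrib, Finset.sum_sub_distrib,
      Finset.sum_const, ← Finset.mul_sum, ← Finset.mul_sum,
      sum_Icc_id_real, sum_Icc_sq_real, Nat.card_Icc]
    simp only [Nat.add_sub_cancel, nsmul_eq_mul]
    ring
  have hPN : pTheta N (fun j r => Real.sqrt ((j:ℝ) * ((N:ℝ) - (j:ℝ))) * ωt (r / l)) (l * R)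
      = (a ^ 2 - 1) ^ 2 / (2 * l ^ 2 * R ^ 4) := by
    rw [pTheta, pThetaVal]
    have hterm : ∀ j ∈ Finset.Icc 1 N,
        ((Real.sqrt ((j:ℝ) * ((N:ℝ) - (j:ℝ))) * ωt ((l * R) / l)) ^ 2
          - (Real.sqrt ((((j-1 : ℕ)):ℝ) * ((N:ℝ) - (((j-1:ℕ)):ℝ))) * ωt ((l * R) / l)) ^ 2
          - (N:ℝ) - 1 + 2 * (j:ℝ)) ^ 2
        = ((N:ℝ) + 1 - 2 * (j:ℝ)) ^ 2 * (a ^ 2 - 1) ^ 2 := by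
      intro j hj
      simp only [Finset.mem_Icc] at hj
      have hj1 : ((j - 1 : ℕ) : ℝ) = (j:ℝ) - 1 := by
        rw [Nat.cast_sub (by omega)]; norm_num
      rw [hrR, mul_pow, mul_pow, hc2 j hj.2, hc2 (j-1) (by omega), hj1, ← ha]
      ring
    rw [Finset.sum_congr rfl hterm, ← Finset.sum_mul, hB]
    have h2l : (N:ℝ) * ((N:ℝ) - 1) * ((N:ℝ) + 1) / 3 = 2 * l ^ 2 := by
      rw [hlsq]; ring
    rw [h2l]
    field_simp
    ring
  -- muF for su(N)
  have hmuN : muF Λ (fun r => l * mt (r / l)) (l * R) = muF (l ^ 2 * Λ) mt R := by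
    simp only [muF, hrR]
    field_simp
  -- the inner map
  have hinner : HasDerivAt (fun y : ℝ => y / l) (1 / l) (l * R) := by
    simpa using (hasDerivAt_id (l * R)).div_const l
  have hinnerdiff : DifferentiableAt ℝ (fun y : ℝ => y / l) (l * R) := hinner.differentiableAt
  refine ⟨?_, ?_, ?_, ?_, ?_⟩
  · norm_num
  · norm_num
  · -- mass equation
    have hm' : HasDerivAt mt
        (muF (l ^ 2 * Λ) mt R * GF 2 vec R + R ^ 2 * pTheta 2 vec R) ((l * R) / l) := by
      rw [hrR]; exact hm
    have hcomp := (hm'.comp (l * R) hinner).const_mul l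
    have key : muF Λ (fun r => l * mt (r / l)) (l * R) *
          GF N (fun j r => Real.sqrt ((j:ℝ) * ((N:ℝ) - (j:ℝ))) * ωt (r / l)) (l * R)
        + (l * R) ^ 2 * pTheta N (fun j r => Real.sqrt ((j:ℝ) * ((N:ℝ) - (j:ℝ))) * ωt (r / l)) (l * R)
        = l * ((muF (l ^ 2 * Λ) mt R * GF 2 vec R + R ^ 2 * pTheta 2 vec R) * (1 / l)) := by
      rw [hmuN, hGN, hPN, hG2, hP2]
      field_simp
    rw [key]
    exact hcomp
  · -- S equation
    have hS' : HasDerivAt St (St R * (2 * GF 2 vec R / R)) ((l * R) / l) := by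
      rw [hrR]; exact hS
    have hcomp := hS'.comp (l * R) hinner
    have key : (fun r => St (r / l)) (l * R) *
        (2 * GF N (fun j r => Real.sqrt ((j:ℝ) * ((N:ℝ) - (j:ℝ))) * ωt (r / l)) (l * R) / (l * R))
        = St R * (2 * GF 2 vec R / R) * (1 / l) := by
      simp only [hrR]
      rw [hGN, hG2]
      ring
    rw [key]
    exact hcomp
  · -- Yang-Mills equations
    intro j hj
    simp only [Finset.mem_Icc] at hj
    have hjN : j ≤ N := by omega
    have hωR : DifferentiableAt ℝ ωt ((l * R) / l) := by rw [hrR]; exact hωd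
    have hωR2 : DifferentiableAt ℝ (deriv ωt) ((l * R) / l) := by rw [hrR]; exact hωd2
    refine ⟨(hωR.comp (l * R) hinnerdiff).const_mul _, ?_, ?_⟩
    · rw [hderivfun j]
      exact ((hωR2.comp (l * R) hinnerdiff).div_const l).const_mul _
    · -- the equation itself
      have hWN : WF (fun j r => Real.sqrt ((j:ℝ) * ((N:ℝ) - (j:ℝ))) * ωt (r / l)) j (l * R)
          = 1 - a ^ 2 := by
        rw [WF, WVal]
        have hj1 : ((j - 1 : ℕ) : ℝ) = (j:ℝ) - 1 := by
          rw [Nat.cast_sub (by omega)]; norm_num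
        have hjp : ((j + 1 : ℕ) : ℝ) = (j:ℝ) + 1 := by push_cast; ring
        simp only [hrR, mul_pow]
        rw [hc2 j hjN, hc2 (j-1) (by omega), hc2 (j+1) (by omega), hj1, hjp, ← ha]
        ring
      have hYMeq' : R ^ 2 * muF (l ^ 2 * Λ) mt R * a''
          + (2 * mt R - 2 * R ^ 3 * pTheta 2 vec R - 2 * (l ^ 2 * Λ) * R ^ 3 / 3) * a'
          + WF vec 1 R * a = 0 := hYMeq
      rw [hP2, hW2] at hYMeq'
      rw [hderiv_at j, hderiv2_at j, hWN, hmuN, hPN]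
      simp only [hrR]
      set c := Real.sqrt ((j:ℝ) * ((N:ℝ) - (j:ℝ)))
      set μv := muF (l ^ 2 * Λ) mt R
      field_simp
      field_simp at hYMeq'
      linear_combination c * hYMeq'
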